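/- The set of pairs (A, c) ∈ M_{n×n}(ℝ) × ℝ^n such that the pair (A, c) is completely observable has full Lebesgue measure in M_{n×n}(ℝ) × ℝ^n. -/

import Mathlib

open Matrix MeasureTheory

lemma mvpoly_null : ∀ (d : ℕ) (p : MvPolynomial (Fin d) ℝ), p ≠ 0 →
    (volume : Measure (Fin d → ℝ)) {x | MvPolynomial.eval x p = 0} = 0 := by
  intro d
  induction d with
  | zero =>
    intro p hp
    obtain ⟨a, rfl⟩ := MvPolynomial.C_surjective (Fin 0) p
    have ha : a ≠ 0 := fun h => hp (by simp [h])
    have : {x : Fin 0 → ℝ | MvPolynomial.eval x (MvPolynomial.C a) = 0} = ∅ := by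
      ext x; simp [ha]
    rw [this]; exact measure_empty
  | succ d ih =>
    intro p hp
    set q : Polynomial (MvPolynomial (Fin d) ℝ) := MvPolynomial.finSuccEquiv ℝ d p with hqdef
    have hq : q ≠ 0 := by
      intro h
      exact hp ((MvPolynomial.finSuccEquiv ℝ d).injective (by simpa [hqdef] using h))
    -- sets
    have hconsCont : Continuous fun ys : ℝ × (Fin d → ℝ) => (Fin.cons ys.1 ys.2 : Fin (d+1) → ℝ) := by
      refine continuous_pi fun i => ?_
      induction i using Fin.cases with
      | zero => simpa using continuous_fst
      | succ j => simpa [Function.comp_def] using (continuous_apply j).comp continuous_snd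
    set T : Set (ℝ × (Fin d → ℝ)) :=
      {ys | MvPolynomial.eval (Fin.cons ys.1 ys.2) p = 0} with hTdef
    have hTmeas : MeasurableSet T :=
      ((MvPolynomial.continuous_eval p).comp hconsCont).measurable (measurableSet_singleton 0)
    set T' : Set ((Fin d → ℝ) × ℝ) :=
      {sy | MvPolynomial.eval (Fin.cons sy.2 sy.1) p = 0} with hT'def
    have hT'meas : MeasurableSet T' := by
      have : Continuous fun sy : (Fin d → ℝ) × ℝ => (sy.2, sy.1) := by fun_prop
      exact (((MvPolynomial.continuous_eval p).comp hconsCont).comp this).measurable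
        (measurableSet_singleton 0)
    have hT'0 : ((volume : Measure (Fin d → ℝ)).prod (volume : Measure ℝ)) T' = 0 := by
      rw [Measure.measure_prod_null hT'meas]
      have hg : q.leadingCoeff ≠ 0 := Polynomial.leadingCoeff_ne_zero.mpr hq
      have hnull := ih q.leadingCoeff hg
      have hae : ∀ᵐ s : Fin d → ℝ, MvPolynomial.eval s q.leadingCoeff ≠ 0 := by
        rw [ae_iff]
        simpa using hnull
      filter_upwards [hae] with s hs
      have hmapne : q.map (MvPolynomial.eval s) ≠ 0 := by
        intro h
        apply hs
        have := congrArg (fun r => Polynomial.coeff r q.natDegree) h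
        simpa [Polynomial.coeff_map, Polynomial.coeff_natDegree] using this
      have hsect : Prod.mk s ⁻¹' T' =
          {y : ℝ | Polynomial.IsRoot (q.map (MvPolynomial.eval s)) y} := by
        ext y
        simp only [hT'def, Set.mem_preimage, Set.mem_setOf_eq, Polynomial.IsRoot]
        rw [MvPolynomial.eval_eq_eval_mv_eval' s y p]
      simp only [Pi.zero_apply, hsect]
      exact Set.Finite.measure_zero (Polynomial.finite_setOf_isRoot hmapne) _
    have hT0 : ((volume : Measure ℝ).prod (volume : Measure (Fin d → ℝ))) T = 0 := by
      have := (Measure.measurePreserving_swap (μ := (volume : Measure (Fin d → ℝ)))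
        (ν := (volume : Measure ℝ))).measure_preimage hTmeas.nullMeasurableSet
      have hsw : Prod.swap ⁻¹' T = T' := by
        ext sy; simp [hTdef, hT'def, Prod.swap]
      rw [hsw] at this
      rw [← this, hT'0]
    -- transfer to Fin (d+1)
    have e := MeasurableEquiv.piFinSuccAbove (fun _ : Fin (d+1) => ℝ) 0
    have MP := (volume_preserving_piFinSuccAbove (fun _ : Fin (d+1) => ℝ) 0).symm
    have hpre : (MeasurableEquiv.piFinSuccAbove (fun _ : Fin (d+1) => ℝ) 0).symm ⁻¹'
        {x : Fin (d+1) → ℝ | MvPolynomial.eval x p = 0} = T := by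
      ext ys
      simp only [Set.mem_preimage, Set.mem_setOf_eq, hTdef,
        MeasurableEquiv.piFinSuccAbove_symm_apply, Fin.insertNthEquiv_zero,
        Fin.consEquiv_apply]
      rfl
    have hZmeas : NullMeasurableSet {x : Fin (d+1) → ℝ | MvPolynomial.eval x p = 0} := by
      exact (((MvPolynomial.continuous_eval p)).measurable
        (measurableSet_singleton 0)).nullMeasurableSet
    have := MP.measure_preimage hZmeas
    rw [hpre] at this
    rw [← this]; exact hT0


lemma mvpoly_null_fintype (σ : Type) [Fintype σ] (P : MvPolynomial σ ℝ) (hP : P ≠ 0) :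
    (volume : Measure (σ → ℝ)) {x | MvPolynomial.eval x P = 0} = 0 := by
  classical
  set d := Fintype.card σ with hd
  let e : Fin d ≃ σ := (Fintype.equivFin σ).symm
  set Q : MvPolynomial (Fin d) ℝ := MvPolynomial.rename e.symm P with hQdef
  have hQ : Q ≠ 0 := by
    intro h
    exact hP (MvPolynomial.rename_injective (R := ℝ) e.symm e.symm.injective (by simpa using h))
  have MP := (volume_measurePreserving_piCongrLeft (fun _ : σ => ℝ) e).symm
  have hZmeas : NullMeasurableSet {y : Fin d → ℝ | MvPolynomial.eval y Q = 0} :=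
    ((MvPolynomial.continuous_eval Q).measurable (measurableSet_singleton 0)).nullMeasurableSet
  have hpre : (MeasurableEquiv.piCongrLeft (fun _ : σ => ℝ) e).symm ⁻¹'
      {y : Fin d → ℝ | MvPolynomial.eval y Q = 0} = {x : σ → ℝ | MvPolynomial.eval x P = 0} := by
    ext x
    have hx : ((MeasurableEquiv.piCongrLeft (fun _ : σ => ℝ) e).symm x ∘ ⇑e.symm) = x := by
      funext s
      simp [MeasurableEquiv.piCongrLeft, Equiv.piCongrLeft_symm_apply]
    simp only [Set.mem_preimage, Set.mem_setOf_eq, hQdef, MvPolynomial.eval_rename, hx]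
  have := MP.measure_preimage hZmeas
  rw [hpre] at this
  rw [this]
  exact mvpoly_null d Q hQ

lemma uncurry_mp (n : ℕ) :
    MeasurePreserving (fun (g : Fin n → Fin n → ℝ) (q : Fin n × Fin n) => g q.1 q.2)
      volume volume := by
  constructor
  · exact measurable_pi_lambda _ fun q =>
      (measurable_pi_apply q.2).comp (measurable_pi_apply q.1)
  · refine ((Measure.pi_eq (μ := fun _ : Fin n × Fin n => (volume : Measure ℝ)) fun s hs => ?_).symm).trans (volume_pi (α := fun _ : Fin n × Fin n => ℝ)).symm
    rw [Measure.map_apply (measurable_pi_lambda _ fun q =>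
        (measurable_pi_apply q.2).comp (measurable_pi_apply q.1))
        (MeasurableSet.univ_pi hs)]
    have : (fun (g : Fin n → Fin n → ℝ) (q : Fin n × Fin n) => g q.1 q.2) ⁻¹'
        (Set.pi Set.univ s) =
        Set.pi Set.univ (fun i => Set.pi Set.univ (fun j => s (i, j))) := by
      ext g
      simp [Set.mem_pi, Prod.forall]
    rw [this, volume_pi_pi]
    simp_rw [volume_pi_pi]
    exact (Fintype.prod_prod_type (f := fun q : Fin n × Fin n => volume (s q))).symm



noncomputable def obsPoly (n : ℕ) : MvPolynomial ((Fin n × Fin n) ⊕ Fin n) ℝ :=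
  (Matrix.of fun i j : Fin n =>
    ((fun k => MvPolynomial.X (Sum.inr k)) ᵥ*
      (Matrix.of fun a b : Fin n => MvPolynomial.X (R := ℝ) (Sum.inl (a, b))) ^ (i : ℕ)) j).det

lemma eval_obsPoly (n : ℕ) (x : ((Fin n × Fin n) ⊕ Fin n) → ℝ) :
    MvPolynomial.eval x (obsPoly n) =
      (Matrix.of fun i j : Fin n =>
        ((fun k => x (Sum.inr k)) ᵥ*
          (Matrix.of fun a b : Fin n => x (Sum.inl (a, b))) ^ (i : ℕ)) j).det := by
  rw [obsPoly, RingHom.map_det]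
  congr 1
  ext i j
  have hpow : ((Matrix.of fun a b : Fin n =>
      MvPolynomial.X (R := ℝ) (Sum.inl (a, b))) ^ (i : ℕ)).map (MvPolynomial.eval x) =
      (Matrix.of fun a b : Fin n => x (Sum.inl (a, b))) ^ (i : ℕ) := by
    rw [← RingHom.mapMatrix_apply, map_pow, RingHom.mapMatrix_apply]
    congr 1
    ext a b
    simp
  simp only [RingHom.mapMatrix_apply, Matrix.map_apply, Matrix.of_apply, Matrix.vecMul,
    dotProduct]
  rw [map_sum]
  refine Finset.sum_congr rfl fun k _ => ?_
  rw [_root_.map_mul, MvPolynomial.eval_X]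
  congr 1
  have : (MvPolynomial.eval x) (((Matrix.of fun a b : Fin n =>
      MvPolynomial.X (R := ℝ) (Sum.inl (a, b))) ^ (i : ℕ)) k j) =
      (((Matrix.of fun a b : Fin n =>
        MvPolynomial.X (R := ℝ) (Sum.inl (a, b))) ^ (i : ℕ)).map (MvPolynomial.eval x)) k j := rfl
  rw [this, hpow]

open Fin.NatCast in
lemma shift_vecMul (m : ℕ) (k : ℕ) :
    (fun j : Fin (m+1) => if j = 0 then (1:ℝ) else 0) ᵥ*
      (Matrix.of fun a b : Fin (m+1) => if b = a + 1 then (1:ℝ) else 0) ^ k =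
    fun j => if j = (k : Fin (m+1)) then 1 else 0 := by
  induction k with
  | zero =>
    funext j
    simp [Matrix.vecMul_one]
  | succ k ih =>
    rw [pow_succ, ← Matrix.vecMul_vecMul, ih]
    funext j
    simp only [Matrix.vecMul, dotProduct, Matrix.of_apply, ite_mul, one_mul, zero_mul]
    rw [Finset.sum_ite_eq' Finset.univ ((k : Fin (m+1))) (fun a => if j = a + 1 then (1:ℝ) else 0)]
    simp only [Finset.mem_univ, if_true]
    norm_num [Nat.cast_add, Nat.cast_one]

open Fin.NatCast in
lemma obsPoly_ne_zero (n : ℕ) : obsPoly n ≠ 0 := by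
  cases n with
  | zero =>
    rw [obsPoly, Matrix.det_fin_zero]
    exact one_ne_zero
  | succ m =>
    set x₀ : ((Fin (m+1) × Fin (m+1)) ⊕ Fin (m+1)) → ℝ :=
      Sum.elim (fun q => if q.2 = q.1 + 1 then (1:ℝ) else 0)
        (fun j => if j = 0 then (1:ℝ) else 0) with hx₀
    intro h
    have heval : MvPolynomial.eval x₀ (obsPoly (m+1)) = 1 := by
      rw [eval_obsPoly]
      have hmat : (Matrix.of fun i j : Fin (m+1) =>
          ((fun k => x₀ (Sum.inr k)) ᵥ*
            (Matrix.of fun a b : Fin (m+1) => x₀ (Sum.inl (a, b))) ^ (i : ℕ)) j) =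
          (1 : Matrix (Fin (m+1)) (Fin (m+1)) ℝ) := by
        ext i j
        have hc : (fun k => x₀ (Sum.inr k)) = fun j : Fin (m+1) => if j = 0 then (1:ℝ) else 0 := rfl
        have hA : (Matrix.of fun a b : Fin (m+1) => x₀ (Sum.inl (a, b))) =
            Matrix.of fun a b : Fin (m+1) => if b = a + 1 then (1:ℝ) else 0 := rfl
        rw [Matrix.of_apply, hc, hA, shift_vecMul m (i : ℕ)]
        simp [Fin.cast_val_eq_self, Matrix.one_apply, eq_comm]
      rw [hmat, Matrix.det_one]
    rw [h] at heval
    simp at heval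

/-- The set of pairs `(A, c)` such that `(A, c)` is completely observable (the observability
matrix with rows `c Aⁱ` is invertible) has full Lebesgue measure in `M_{n×n}(ℝ) × ℝⁿ`. -/
theorem stmt14 (n : ℕ) :
    volume {p : (Fin n → Fin n → ℝ) × (Fin n → ℝ) |
      ¬ IsUnit (Matrix.of fun i j : Fin n =>
          (p.2 ᵥ* (Matrix.of p.1) ^ (i : ℕ)) j).det} = 0 := by
  classical
  set F : (Fin n → Fin n → ℝ) × (Fin n → ℝ) → (((Fin n × Fin n) ⊕ Fin n) → ℝ) :=
    (MeasurableEquiv.sumPiEquivProdPi (fun _ : (Fin n × Fin n) ⊕ Fin n => ℝ)).symm ∘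
      (Prod.map (fun (g : Fin n → Fin n → ℝ) (q : Fin n × Fin n) => g q.1 q.2) id) with hF
  have MPF : MeasurePreserving F volume volume := by
    refine MeasurePreserving.comp
      (μb := (volume : Measure ((Fin n × Fin n → ℝ) × (Fin n → ℝ)))) ?_ ?_
    · exact volume_measurePreserving_sumPiEquivProdPi_symm (fun _ => ℝ)
    · exact (uncurry_mp n).prod (MeasurePreserving.id _)
  have key : ∀ p : (Fin n → Fin n → ℝ) × (Fin n → ℝ),
      MvPolynomial.eval (F p) (obsPoly n) =
      (Matrix.of fun i j : Fin n => (p.2 ᵥ* (Matrix.of p.1) ^ (i : ℕ)) j).det := by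
    intro p
    rw [eval_obsPoly]
    have h1 : (fun k => F p (Sum.inr k)) = p.2 := rfl
    have h2 : (Matrix.of fun a b : Fin n => F p (Sum.inl (a, b))) = Matrix.of p.1 := rfl
    rw [h1, h2]
  have hmeas : NullMeasurableSet {x : ((Fin n × Fin n) ⊕ Fin n) → ℝ |
      MvPolynomial.eval x (obsPoly n) = 0} :=
    ((MvPolynomial.continuous_eval (obsPoly n)).measurable
      (measurableSet_singleton 0)).nullMeasurableSet
  have hset : {p : (Fin n → Fin n → ℝ) × (Fin n → ℝ) |
      ¬ IsUnit (Matrix.of fun i j : Fin n =>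
          (p.2 ᵥ* (Matrix.of p.1) ^ (i : ℕ)) j).det} =
      F ⁻¹' {x | MvPolynomial.eval x (obsPoly n) = 0} := by
    ext p
    simp only [Set.mem_setOf_eq, Set.mem_preimage, key p, isUnit_iff_ne_zero, not_not]
  rw [hset, MPF.measure_preimage hmeas]
  exact mvpoly_null_fintype _ _ (obsPoly_ne_zero n)
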